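/- Let R = ℂ[x_1,...,x_n]/(x_1x_2), R_1 = ℂ[x_1,...,x_n]/(x_1), R_2 = ℂ[x_1,...,x_n]/(x_2), B = R/(x_1,x_2). Then the sequence of R-modules Ω_R → Ω_{R_1} × Ω_{R_2} → Ω_B, where the first map sends d f̄(x_1,...,x_n) to (d f̄(0,x_2,...,x_n), d f̄(x_1,0,x_3,...,x_n)) and the second sends a pair of differentials to the difference of their restrictions to B, is exact in the middle. -/

import Mathlib

set_option maxHeartbeats 1000000
set_option synthInstance.maxHeartbeats 400000

open MvPolynomial

noncomputable section NCAux

open KaehlerDifferential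

variable {σ : Type}

/-- Ring-theoretic gluing: if `p - q ∈ (x, y)` then there is `w` congruent to `p`
mod `x` and to `q` mod `y`. -/
theorem nc_glue {A : Type} [CommRing A] (x y p q : A)
    (h : p - q ∈ Ideal.span ({x, y} : Set A)) :
    ∃ w : A, w - p ∈ Ideal.span {x} ∧ w - q ∈ Ideal.span {y} := by
  obtain ⟨α, β, hab⟩ := Ideal.mem_span_pair.1 h
  refine ⟨p - α * x, ?_, ?_⟩
  · exact Ideal.mem_span_singleton'.2 ⟨-α, by ring⟩
  · refine Ideal.mem_span_singleton'.2 ⟨β, ?_⟩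
    have : p - q = α * x + β * y := hab.symm
    linear_combination -this

/-- The kernel of `mapBaseChange` for a quotient by `span s` is contained in the span of
the images of the differentials of the generators. -/
theorem nc_ker_mapBaseChange_le {A : Type} [CommRing A] [Algebra ℂ A] (s : Set A) :
    LinearMap.ker (mapBaseChange ℂ A (A ⧸ Ideal.span s)) ≤
      Submodule.span (A ⧸ Ideal.span s)
        ((fun g => (1 : A ⧸ Ideal.span s) ⊗ₜ[A] D ℂ A g) '' s) := by
  have key : ∀ y ∈ Ideal.span s, (1 : A ⧸ Ideal.span s) ⊗ₜ[A] D ℂ A y ∈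
      Submodule.span (A ⧸ Ideal.span s)
        ((fun g => (1 : A ⧸ Ideal.span s) ⊗ₜ[A] D ℂ A g) '' s) := by
    intro y hy
    induction hy using Submodule.span_induction with
    | mem g hg => exact Submodule.subset_span ⟨g, hg, rfl⟩
    | zero => simp
    | add u v hu hv ihu ihv =>
      rw [map_add, TensorProduct.tmul_add]; exact add_mem ihu ihv
    | smul c u hu ihu =>
      have h1 : (1 : A ⧸ Ideal.span s) ⊗ₜ[A] D ℂ A (c • u) =
          c • ((1 : A ⧸ Ideal.span s) ⊗ₜ[A] D ℂ A u) +
            (Ideal.Quotient.mk (Ideal.span s) u) • ((1 : A ⧸ Ideal.span s) ⊗ₜ[A] D ℂ A c) := by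
        rw [smul_eq_mul, Derivation.leibniz, TensorProduct.tmul_add, TensorProduct.tmul_smul,
          TensorProduct.tmul_smul]
        congr 1
      rw [h1]
      have h2 : (Ideal.Quotient.mk (Ideal.span s) u) = 0 := Ideal.Quotient.eq_zero_iff_mem.2 hu
      rw [h2, zero_smul, add_zero]
      exact Submodule.smul_of_tower_mem _ c ihu
  intro z hz
  have hsurj : Function.Surjective (algebraMap A (A ⧸ Ideal.span s)) := by
    rw [Ideal.Quotient.algebraMap_eq]; exact Ideal.Quotient.mk_surjective
  have hz' : z ∈ LinearMap.range (kerCotangentToTensor ℂ A (A ⧸ Ideal.span s)) := by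
    rw [range_kerCotangentToTensor ℂ A _ hsurj]
    simpa using hz
  obtain ⟨ξ, rfl⟩ := hz'
  obtain ⟨⟨y, hy⟩, rfl⟩ := Ideal.toCotangent_surjective _ ξ
  rw [kerCotangentToTensor_toCotangent]
  refine key y ?_
  rwa [Ideal.Quotient.algebraMap_eq, Ideal.mk_ker] at hy

/-- The standard surjection `(σ →₀ (A ⧸ I)) → Ω[(A ⧸ I)⁄ℂ]` sending `single i c` to
`c • d x_i`, for `A` a multivariate polynomial ring. -/
def NCT (I : Ideal (MvPolynomial σ ℂ)) :
    (σ →₀ (MvPolynomial σ ℂ ⧸ I)) →ₗ[MvPolynomial σ ℂ ⧸ I] Ω[(MvPolynomial σ ℂ ⧸ I)⁄ℂ] :=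
  Finsupp.linearCombination _ (fun i => D ℂ _ (Ideal.Quotient.mk I (X i)))

theorem NCT_single (I : Ideal (MvPolynomial σ ℂ)) (i : σ) (c : MvPolynomial σ ℂ ⧸ I) :
    NCT I (Finsupp.single i c) = c • D ℂ _ (Ideal.Quotient.mk I (X i)) := by
  simp [NCT]

theorem NCT_eq (I : Ideal (MvPolynomial σ ℂ)) :
    NCT I = (mapBaseChange ℂ (MvPolynomial σ ℂ) (MvPolynomial σ ℂ ⧸ I)) ∘ₗ
      (((mvPolynomialBasis ℂ σ).baseChange
        (MvPolynomial σ ℂ ⧸ I)).repr.symm : _ →ₗ[MvPolynomial σ ℂ ⧸ I] _) := by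
  apply Finsupp.lhom_ext
  intro i c
  simp only [NCT, Finsupp.linearCombination_single, LinearMap.coe_comp, LinearEquiv.coe_coe,
    Function.comp_apply, Module.Basis.repr_symm_single, Module.Basis.baseChange_apply, map_smul]
  congr 1
  rw [mvPolynomialBasis_apply, mapBaseChange_tmul]
  rw [map_D, Ideal.Quotient.algebraMap_eq]
  exact (one_smul (MvPolynomial σ ℂ ⧸ I) (D ℂ (MvPolynomial σ ℂ ⧸ I) (Ideal.Quotient.mk I (X i)))).symm

theorem NCT_surjective (I : Ideal (MvPolynomial σ ℂ)) : Function.Surjective (NCT I) := by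
  rw [NCT_eq]
  have hsurj : Function.Surjective (algebraMap (MvPolynomial σ ℂ) (MvPolynomial σ ℂ ⧸ I)) := by
    rw [Ideal.Quotient.algebraMap_eq]; exact Ideal.Quotient.mk_surjective
  exact (mapBaseChange_surjective ℂ _ _ hsurj).comp (LinearEquiv.surjective _)

theorem nc_repr_one_tmul_DX (I : Ideal (MvPolynomial σ ℂ)) (j : σ) :
    ((mvPolynomialBasis ℂ σ).baseChange (MvPolynomial σ ℂ ⧸ I)).repr
      ((1 : MvPolynomial σ ℂ ⧸ I) ⊗ₜ[MvPolynomial σ ℂ] D ℂ (MvPolynomial σ ℂ) (X j)) =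
      Finsupp.single j 1 := by
  classical
  ext i
  rw [Module.Basis.baseChange_repr_tmul, mvPolynomialBasis_repr_D_X]
  simp [Finsupp.single_apply]

/-- Kernel of `NCT` for the quotient by two variables. -/
theorem nc_ker_NCT_pair (a b : σ) (w : σ →₀ MvPolynomial σ ℂ ⧸ Ideal.span ({X a, X b} : Set (MvPolynomial σ ℂ)))
    (hw : NCT (Ideal.span ({X a, X b} : Set (MvPolynomial σ ℂ))) w = 0) :
    w ∈ Submodule.span (MvPolynomial σ ℂ ⧸ Ideal.span ({X a, X b} : Set (MvPolynomial σ ℂ)))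
      {Finsupp.single a 1, Finsupp.single b 1} := by
  have hz : ((mvPolynomialBasis ℂ σ).baseChange
      (MvPolynomial σ ℂ ⧸ Ideal.span ({X a, X b} : Set (MvPolynomial σ ℂ)))).repr.symm w ∈
      LinearMap.ker (mapBaseChange ℂ (MvPolynomial σ ℂ)
        (MvPolynomial σ ℂ ⧸ Ideal.span ({X a, X b} : Set (MvPolynomial σ ℂ)))) := by
    rw [LinearMap.mem_ker]
    have h2 := hw
    rw [NCT_eq] at h2
    exact h2
  have hle := nc_ker_mapBaseChange_le ({X a, X b} : Set (MvPolynomial σ ℂ)) hz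
  rw [Set.image_insert_eq, Set.image_singleton] at hle
  obtain ⟨c, d, hcd⟩ := Submodule.mem_span_pair.1 hle
  have hweq : w = c • (Finsupp.single a 1) + d • (Finsupp.single b 1) := by
    apply ((mvPolynomialBasis ℂ σ).baseChange _).repr.symm.injective
    rw [map_add, map_smul, map_smul, Module.Basis.repr_symm_single_one, Module.Basis.repr_symm_single_one,
      Module.Basis.baseChange_apply, Module.Basis.baseChange_apply, mvPolynomialBasis_apply,
      mvPolynomialBasis_apply, hcd]
  rw [hweq]
  exact Submodule.mem_span_pair.2 ⟨c, d, rfl⟩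

theorem NCT_naturality (I I' : Ideal (MvPolynomial σ ℂ))
    [Algebra (MvPolynomial σ ℂ ⧸ I) (MvPolynomial σ ℂ ⧸ I')]
    [IsScalarTower ℂ (MvPolynomial σ ℂ ⧸ I) (MvPolynomial σ ℂ ⧸ I')]
    [SMulCommClass ℂ (MvPolynomial σ ℂ ⧸ I) (MvPolynomial σ ℂ ⧸ I')]
    (hc : ∀ p : MvPolynomial σ ℂ,
      algebraMap (MvPolynomial σ ℂ ⧸ I) (MvPolynomial σ ℂ ⧸ I') (Ideal.Quotient.mk I p) =
        Ideal.Quotient.mk I' p)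
    (w : σ →₀ MvPolynomial σ ℂ ⧸ I) :
    map ℂ ℂ (MvPolynomial σ ℂ ⧸ I) (MvPolynomial σ ℂ ⧸ I') (NCT I w) =
      NCT I' (w.mapRange (algebraMap _ _) (map_zero _)) := by
  induction w using Finsupp.induction_linear with
  | zero => simp
  | add u v hu hv => rw [map_add, map_add, Finsupp.mapRange_add (map_add _), map_add, hu, hv]
  | single i c =>
    rw [NCT_single, map_smul, Finsupp.mapRange_single, NCT_single, map_D, hc]
    exact (algebraMap_smul (MvPolynomial σ ℂ ⧸ I') c (D ℂ (MvPolynomial σ ℂ ⧸ I') (Ideal.Quotient.mk I' (X i)))).symm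

end NCAux

/-- **Exactness of the local differentials sequence at a normal crossing
double point.**  Let `R = ℂ[x_1,…,x_n]/(x_1x_2)`, `R_1 = ℂ[x_1,…,x_n]/(x_1)`,
`R_2 = ℂ[x_1,…,x_n]/(x_2)` and `B = R/(x_1,x_2) = ℂ[x_1,…,x_n]/(x_1,x_2)`.
The sequence of modules of Kähler differentials over `ℂ`
`Ω_R → Ω_{R_1} × Ω_{R_2} → Ω_B`,
where the first map sends `d f̄(x_1,…,x_n)` to
`(d f̄(0,x_2,…,x_n), d f̄(x_1,0,x_3,…,x_n))` (it is induced by the ring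
surjections `R → R_i` setting `x_1`, resp. `x_2`, to `0`) and the second map
sends a pair of differentials to the difference of their restrictions to `B`
(induced by the surjections `R_i → B`), is exact in the middle.  This is the
local computation underlying the exactness of
`0 → τ_X → Ω_X → π_*Ω_{X̃} → ν_*(Ω_{Z̃} ⊗ L)` for a normal crossing double
point. -/
theorem kaehler_sequence_exact (n : ℕ) (hn : 2 ≤ n) :
    letI P := MvPolynomial (Fin n) ℂ
    letI x1 : P := X ⟨0, by omega⟩
    letI x2 : P := X ⟨1, by omega⟩
    letI R := P ⧸ Ideal.span {x1 * x2}
    letI R1 := P ⧸ Ideal.span {x1}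
    letI R2 := P ⧸ Ideal.span {x2}
    letI B := P ⧸ Ideal.span ({x1, x2} : Set P)
    letI : Algebra R R1 := (Ideal.Quotient.factor
      (Ideal.span_singleton_le_span_singleton.2 (dvd_mul_right x1 x2))).toAlgebra
    letI : Algebra R R2 := (Ideal.Quotient.factor
      (Ideal.span_singleton_le_span_singleton.2 (dvd_mul_left x2 x1))).toAlgebra
    letI : Algebra R1 B := (Ideal.Quotient.factor (S := Ideal.span {x1})
      (T := Ideal.span ({x1, x2} : Set P))
      (Ideal.span_mono (Set.singleton_subset_iff.2 (Set.mem_insert _ _)))).toAlgebra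
    letI : Algebra R2 B := (Ideal.Quotient.factor (S := Ideal.span {x2})
      (T := Ideal.span ({x1, x2} : Set P))
      (Ideal.span_mono (Set.singleton_subset_iff.2
        (Set.mem_insert_of_mem _ rfl)))).toAlgebra
    letI := IsScalarTower.of_algebraMap_eq (R := ℂ) (S := R) (A := R1) fun _ => rfl
    letI := IsScalarTower.of_algebraMap_eq (R := ℂ) (S := R) (A := R2) fun _ => rfl
    letI := IsScalarTower.of_algebraMap_eq (R := ℂ) (S := R1) (A := B) fun _ => rfl
    letI := IsScalarTower.of_algebraMap_eq (R := ℂ) (S := R2) (A := B) fun _ => rfl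
    letI := IsScalarTower.to_smulCommClass (R := ℂ) (A := R) (M := R1)
    letI := IsScalarTower.to_smulCommClass (R := ℂ) (A := R) (M := R2)
    letI := IsScalarTower.to_smulCommClass (R := ℂ) (A := R1) (M := B)
    letI := IsScalarTower.to_smulCommClass (R := ℂ) (A := R2) (M := B)
    Function.Exact
      (fun ω : Ω[R⁄ℂ] =>
        ((KaehlerDifferential.map ℂ ℂ R R1 ω, KaehlerDifferential.map ℂ ℂ R R2 ω) :
          Ω[R1⁄ℂ] × Ω[R2⁄ℂ]))
      (fun p : Ω[R1⁄ℂ] × Ω[R2⁄ℂ] =>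
        KaehlerDifferential.map ℂ ℂ R1 B p.1 - KaehlerDifferential.map ℂ ℂ R2 B p.2) := by

  classical
  letI P := MvPolynomial (Fin n) ℂ
  letI x1 : P := X (⟨0, by omega⟩ : Fin n)
  letI x2 : P := X (⟨1, by omega⟩ : Fin n)
  letI I : Ideal P := Ideal.span {x1 * x2}
  letI I1 : Ideal P := Ideal.span {x1}
  letI I2 : Ideal P := Ideal.span {x2}
  letI J : Ideal P := Ideal.span ({x1, x2} : Set P)
  letI R := P ⧸ I
  letI R1 := P ⧸ I1
  letI R2 := P ⧸ I2
  letI B := P ⧸ J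
  letI : Algebra R R1 := (Ideal.Quotient.factor
    (Ideal.span_singleton_le_span_singleton.2 (dvd_mul_right x1 x2))).toAlgebra
  letI : Algebra R R2 := (Ideal.Quotient.factor
    (Ideal.span_singleton_le_span_singleton.2 (dvd_mul_left x2 x1))).toAlgebra
  letI : Algebra R1 B := (Ideal.Quotient.factor (S := Ideal.span {x1})
    (T := Ideal.span ({x1, x2} : Set P))
    (Ideal.span_mono (Set.singleton_subset_iff.2 (Set.mem_insert _ _)))).toAlgebra
  letI : Algebra R2 B := (Ideal.Quotient.factor (S := Ideal.span {x2})
    (T := Ideal.span ({x1, x2} : Set P))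
    (Ideal.span_mono (Set.singleton_subset_iff.2
      (Set.mem_insert_of_mem _ rfl)))).toAlgebra
  letI := IsScalarTower.of_algebraMap_eq (R := ℂ) (S := R) (A := R1) fun _ => rfl
  letI := IsScalarTower.of_algebraMap_eq (R := ℂ) (S := R) (A := R2) fun _ => rfl
  letI := IsScalarTower.of_algebraMap_eq (R := ℂ) (S := R1) (A := B) fun _ => rfl
  letI := IsScalarTower.of_algebraMap_eq (R := ℂ) (S := R2) (A := B) fun _ => rfl
  letI := IsScalarTower.to_smulCommClass (R := ℂ) (A := R) (M := R1)
  letI := IsScalarTower.to_smulCommClass (R := ℂ) (A := R) (M := R2)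
  letI := IsScalarTower.to_smulCommClass (R := ℂ) (A := R1) (M := B)
  letI := IsScalarTower.to_smulCommClass (R := ℂ) (A := R2) (M := B)
  have hab : (⟨0, by omega⟩ : Fin n) ≠ (⟨1, by omega⟩ : Fin n) := by simp [Fin.ext_iff]
  -- algebraMap compatibility lemmas
  have hRR1 : ∀ q : P, algebraMap R R1 (Ideal.Quotient.mk I q) = Ideal.Quotient.mk I1 q := by
    intro q; rw [RingHom.algebraMap_toAlgebra]; exact Ideal.Quotient.factor_mk _ q
  have hRR2 : ∀ q : P, algebraMap R R2 (Ideal.Quotient.mk I q) = Ideal.Quotient.mk I2 q := by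
    intro q; rw [RingHom.algebraMap_toAlgebra]; exact Ideal.Quotient.factor_mk _ q
  have hR1B : ∀ q : P, algebraMap R1 B (Ideal.Quotient.mk I1 q) = Ideal.Quotient.mk J q := by
    intro q; rw [RingHom.algebraMap_toAlgebra]; exact Ideal.Quotient.factor_mk _ q
  have hR2B : ∀ q : P, algebraMap R2 B (Ideal.Quotient.mk I2 q) = Ideal.Quotient.mk J q := by
    intro q; rw [RingHom.algebraMap_toAlgebra]; exact Ideal.Quotient.factor_mk _ q
  have hXa0 : Ideal.Quotient.mk I1 x1 = 0 :=
    Ideal.Quotient.eq_zero_iff_mem.2 (Ideal.subset_span rfl)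
  have hXb0 : Ideal.Quotient.mk I2 x2 = 0 :=
    Ideal.Quotient.eq_zero_iff_mem.2 (Ideal.subset_span rfl)
  intro p
  constructor
  · -- p maps to zero → p in the range
    intro hp
    have hp' : KaehlerDifferential.map ℂ ℂ R1 B p.1 -
        KaehlerDifferential.map ℂ ℂ R2 B p.2 = 0 := hp
    obtain ⟨u, hu⟩ := NCT_surjective I1 p.1
    obtain ⟨v, hv⟩ := NCT_surjective I2 p.2
    have hTB : NCT J (u.mapRange (algebraMap R1 B) (map_zero _) -
        v.mapRange (algebraMap R2 B) (map_zero _)) = 0 := by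
      rw [map_sub, ← NCT_naturality I1 J hR1B u, ← NCT_naturality I2 J hR2B v, hu, hv]
      exact hp'
    have hmem := nc_ker_NCT_pair (⟨0, by omega⟩ : Fin n) (⟨1, by omega⟩ : Fin n) _ hTB
    obtain ⟨c, d, hcd⟩ := Submodule.mem_span_pair.1 hmem
    have heq : ∀ i : Fin n, i ≠ (⟨0, by omega⟩ : Fin n) → i ≠ (⟨1, by omega⟩ : Fin n) →
        algebraMap R1 B (u i) = algebraMap R2 B (v i) := by
      intro i hia hib
      have h := DFunLike.congr_fun hcd i
      simp only [Finsupp.add_apply, Finsupp.coe_smul, Pi.smul_apply, Finsupp.single_apply,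
        if_neg (Ne.symm hia), if_neg (Ne.symm hib), smul_zero, add_zero, zero_add,
        Finsupp.sub_apply, Finsupp.mapRange_apply] at h
      exact sub_eq_zero.1 h.symm
    have hfib : ∀ i : Fin n, ∃ r : R,
        (i ≠ (⟨0, by omega⟩ : Fin n) → algebraMap R R1 r = u i) ∧
        (i ≠ (⟨1, by omega⟩ : Fin n) → algebraMap R R2 r = v i) ∧
        (u i = 0 → v i = 0 → r = 0) := by
      intro i
      by_cases h0 : u i = 0 ∧ v i = 0
      · refine ⟨0, fun _ => ?_, fun _ => ?_, fun _ _ => rfl⟩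
        · rw [map_zero, h0.1]
        · rw [map_zero, h0.2]
      · by_cases hia : i = (⟨0, by omega⟩ : Fin n)
        · obtain ⟨q, hq⟩ := Ideal.Quotient.mk_surjective (v i)
          refine ⟨Ideal.Quotient.mk I q, fun h => absurd hia h, fun _ => ?_,
            fun h1 h2 => absurd ⟨h1, h2⟩ h0⟩
          rw [hRR2, hq]
        · by_cases hib : i = (⟨1, by omega⟩ : Fin n)
          · obtain ⟨q, hq⟩ := Ideal.Quotient.mk_surjective (u i)
            refine ⟨Ideal.Quotient.mk I q, fun _ => ?_, fun h => absurd hib h,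
              fun h1 h2 => absurd ⟨h1, h2⟩ h0⟩
            rw [hRR1, hq]
          · obtain ⟨pu, hpu⟩ := Ideal.Quotient.mk_surjective (u i)
            obtain ⟨qv, hqv⟩ := Ideal.Quotient.mk_surjective (v i)
            have hB : Ideal.Quotient.mk J pu = Ideal.Quotient.mk J qv := by
              rw [← hR1B, ← hR2B, hpu, hqv]
              exact heq i hia hib
            obtain ⟨w, hw1, hw2⟩ := nc_glue x1 x2 pu qv (Ideal.Quotient.eq.1 hB)
            refine ⟨Ideal.Quotient.mk I w, fun _ => ?_, fun _ => ?_,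
              fun h1 h2 => absurd ⟨h1, h2⟩ h0⟩
            · rw [hRR1, ← hpu]
              exact Ideal.Quotient.eq.2 hw1
            · rw [hRR2, ← hqv]
              exact Ideal.Quotient.eq.2 hw2
    choose f hf1 hf2 hf3 using hfib
    set wfs : Fin n →₀ R := Finsupp.onFinset (u.support ∪ v.support) f (by
      intro i hi
      by_contra hmem2
      simp only [Finset.mem_union, Finsupp.mem_support_iff, not_or, not_not] at hmem2
      exact hi (hf3 i hmem2.1 hmem2.2)) with hwfs
    have hwfs_apply : ∀ i, wfs i = f i := fun i => rfl
    refine ⟨NCT I wfs, ?_⟩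
    have h1 : KaehlerDifferential.map ℂ ℂ R R1 (NCT I wfs) = p.1 := by
      rw [NCT_naturality I I1 hRR1 wfs]
      have hdiff : wfs.mapRange (algebraMap R R1) (map_zero _) =
          u + Finsupp.single (⟨0, by omega⟩ : Fin n)
            (algebraMap R R1 (f (⟨0, by omega⟩ : Fin n)) - u (⟨0, by omega⟩ : Fin n)) := by
        ext i
        by_cases hia : i = (⟨0, by omega⟩ : Fin n)
        · subst hia
          simp [Finsupp.mapRange_apply, hwfs_apply]
        · simp [Finsupp.mapRange_apply, hwfs_apply, Finsupp.single_apply,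
            if_neg (Ne.symm hia), hf1 i hia]
      rw [hdiff, map_add, NCT_single, hXa0]
      simpa using hu
    have h2 : KaehlerDifferential.map ℂ ℂ R R2 (NCT I wfs) = p.2 := by
      rw [NCT_naturality I I2 hRR2 wfs]
      have hdiff : wfs.mapRange (algebraMap R R2) (map_zero _) =
          v + Finsupp.single (⟨1, by omega⟩ : Fin n)
            (algebraMap R R2 (f (⟨1, by omega⟩ : Fin n)) - v (⟨1, by omega⟩ : Fin n)) := by
        ext i
        by_cases hib : i = (⟨1, by omega⟩ : Fin n)
        · subst hib
          simp [Finsupp.mapRange_apply, hwfs_apply]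
        · simp [Finsupp.mapRange_apply, hwfs_apply, Finsupp.single_apply,
            if_neg (Ne.symm hib), hf2 i hib]
      rw [hdiff, map_add, NCT_single, hXb0]
      simpa using hv
    exact Prod.ext h1 h2
  · -- elements in the range map to zero
    rintro ⟨ω, rfl⟩
    obtain ⟨w, rfl⟩ := NCT_surjective I ω
    show KaehlerDifferential.map ℂ ℂ R1 B (KaehlerDifferential.map ℂ ℂ R R1 (NCT I w)) -
      KaehlerDifferential.map ℂ ℂ R2 B (KaehlerDifferential.map ℂ ℂ R R2 (NCT I w)) = 0
    rw [NCT_naturality I I1 hRR1 w, NCT_naturality I I2 hRR2 w,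
      NCT_naturality I1 J hR1B, NCT_naturality I2 J hR2B, sub_eq_zero]
    congr 1
    ext i
    simp only [Finsupp.mapRange_apply]
    obtain ⟨q, hq⟩ := Ideal.Quotient.mk_surjective (w i)
    rw [← hq, hRR1, hRR2, hR1B, hR2B]
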